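/- Let Q = Qᵀ ≻ 0 strictly block diagonally dominant with gaps δ_i(Q) > 0, A = diag(α_1 I,...,α_N I) with α_i > 0, x̂ = -Q⁻¹r, x̂_A = -(Q+A)⁻¹r, and η ∈ (0,1). If α_i ≤ (η/(1-η)) δ_i(Q) for all i ∈ [N], then ‖x̂ - x̂_A‖_{2,p} / ‖x̂‖_{2,p} ≤ η (assuming x̂ ≠ 0). -/

import Mathlib

open Matrix BigOperators Finset

noncomputable def specNorm {𝕜 : Type*} [RCLike 𝕜] {m n : Type*} [Fintype m] [Fintype n]
    [DecidableEq m] [DecidableEq n] (A : Matrix m n 𝕜) : ℝ :=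
  ‖LinearMap.toContinuousLinearMap (Matrix.toEuclideanLin A)‖

noncomputable def minEig {n : Type*} [Fintype n] [DecidableEq n] (A : Matrix n n ℝ) : ℝ :=
  sInf {μ : ℝ | (A - μ • 1).det = 0}

noncomputable def maxEig {n : Type*} [Fintype n] [DecidableEq n] (A : Matrix n n ℝ) : ℝ :=
  sSup {μ : ℝ | (A - μ • 1).det = 0}

def blk {N : ℕ} {d : Fin N → ℕ}
    (B : Matrix ((i : Fin N) × Fin (d i)) ((i : Fin N) × Fin (d i)) ℝ) (i j : Fin N) :
    Matrix (Fin (d i)) (Fin (d j)) ℝ := fun a b => B ⟨i, a⟩ ⟨j, b⟩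

noncomputable def eNorm {k : ℕ} (v : Fin k → ℝ) : ℝ := Real.sqrt (∑ a, v a ^ 2)

noncomputable def blockVecNorm {N : ℕ} {d : Fin N → ℕ}
    (x : ((i : Fin N) × Fin (d i)) → ℝ) : ℝ :=
  ⨆ i, eNorm (fun a => x ⟨i, a⟩)

noncomputable def blockOpNorm {N : ℕ} {d : Fin N → ℕ}
    (B : Matrix ((i : Fin N) × Fin (d i)) ((i : Fin N) × Fin (d i)) ℝ) : ℝ :=
  sInf {c | 0 ≤ c ∧ ∀ x, blockVecNorm (B.mulVec x) ≤ c * blockVecNorm x}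

lemma det_sub_smul_eq_prod {k : ℕ} {M : Matrix (Fin k) (Fin k) ℝ} (hM : M.IsHermitian) (μ : ℝ) :
    (M - μ • 1).det = ∏ j, (hM.eigenvalues j - μ) := by
  classical
  set U := (hM.eigenvectorUnitary : Matrix (Fin k) (Fin k) ℝ) with hU
  have hUU : U * star U = 1 := (Matrix.mem_unitaryGroup_iff).mp hM.eigenvectorUnitary.2
  have hDiag : M - μ • 1 = U * (Matrix.diagonal (fun j => hM.eigenvalues j - μ)) * star U := by
    have hst := hM.spectral_theorem
    have : (Matrix.diagonal (RCLike.ofReal ∘ hM.eigenvalues) : Matrix (Fin k) (Fin k) ℝ)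
        = Matrix.diagonal hM.eigenvalues := by
      congr 1
    rw [this, Unitary.conjStarAlgAut_apply] at hst
    have h1 : Matrix.diagonal (fun j => hM.eigenvalues j - μ)
        = Matrix.diagonal hM.eigenvalues - μ • (1 : Matrix (Fin k) (Fin k) ℝ) := by
      rw [Matrix.smul_one_eq_diagonal, ← Matrix.diagonal_sub]
    rw [h1, Matrix.mul_sub, Matrix.sub_mul, ← hst]
    congr 1
    rw [Matrix.mul_smul, Matrix.smul_mul, mul_one, hUU]
  have hUU' : star U * U = 1 := (Matrix.mem_unitaryGroup_iff').mp hM.eigenvectorUnitary.2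
  rw [hDiag, Matrix.det_mul, Matrix.det_mul, mul_comm, ← mul_assoc, ← Matrix.det_mul, hUU',
    Matrix.det_one, one_mul, Matrix.det_diagonal]

lemma minEig_le_eigenvalues {k : ℕ} {M : Matrix (Fin k) (Fin k) ℝ} (hM : M.IsHermitian)
    (j : Fin k) : minEig M ≤ hM.eigenvalues j := by
  have hset : {μ : ℝ | (M - μ • 1).det = 0} = Set.range hM.eigenvalues := by
    ext μ
    simp only [Set.mem_setOf_eq, det_sub_smul_eq_prod hM, Finset.prod_eq_zero_iff,
      Set.mem_range, sub_eq_zero, Finset.mem_univ, true_and]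
  rw [minEig, hset]
  exact csInf_le (Set.Finite.bddBelow (Set.finite_range _)) ⟨j, rfl⟩

lemma rayleigh_lower {k : ℕ} (hk : k ≠ 0) {M : Matrix (Fin k) (Fin k) ℝ} (hM : M.IsHermitian)
    (w : Fin k → ℝ) : minEig M * (w ⬝ᵥ w) ≤ w ⬝ᵥ (M *ᵥ w) := by
  classical
  have : Nonempty (Fin k) := ⟨⟨0, Nat.pos_of_ne_zero hk⟩⟩
  set x : EuclideanSpace ℝ (Fin k) := (WithLp.equiv 2 (Fin k → ℝ)).symm w with hx
  set b := hM.eigenvectorBasis with hb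
  set T := Matrix.toEuclideanLin M with hT
  have hsym : LinearMap.IsSymmetric T := Matrix.isHermitian_iff_isSymmetric.mp hM
  have hTb : ∀ j, T (b j) = hM.eigenvalues j • b j := by
    intro j
    apply (WithLp.equiv 2 (Fin k → ℝ)).injective
    have := hM.mulVec_eigenvectorBasis j
    simpa [hT, hb, Matrix.ofLp_toEuclideanLin_apply] using this
  have key : ∀ (y : EuclideanSpace ℝ (Fin k)),
      (inner ℝ y (T y) : ℝ) = ∑ j, hM.eigenvalues j * (inner ℝ y (b j) : ℝ)^2 := by
    intro y
    rw [← b.sum_inner_mul_inner y (T y)]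
    congr 1; ext j
    have : (inner ℝ (b j) (T y) : ℝ) = hM.eigenvalues j * inner ℝ (b j) y := by
      rw [← hsym (b j) y, hTb j, inner_smul_left]
      simp [RCLike.star_def]
    rw [this, real_inner_comm (b j) y]
    ring
  have hinner : (inner ℝ x (T x) : ℝ) = w ⬝ᵥ (M *ᵥ w) := by
    simp only [PiLp.inner_apply, RCLike.inner_apply, starRingEnd_apply, star_trivial]
    exact Finset.sum_congr rfl fun a _ => mul_comm _ _
  have hself : (inner ℝ x x : ℝ) = w ⬝ᵥ w := by
    simp only [PiLp.inner_apply, RCLike.inner_apply, starRingEnd_apply, star_trivial]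
    rfl
  have hnorm : (inner ℝ x x : ℝ) = ∑ j, (inner ℝ x (b j) : ℝ)^2 := by
    rw [← b.sum_inner_mul_inner x x]
    congr 1; ext j
    rw [real_inner_comm (b j) x]; ring
  rw [← hinner, ← hself, key x, hnorm, Finset.mul_sum]
  apply Finset.sum_le_sum
  intro j _
  have := minEig_le_eigenvalues hM j
  nlinarith [sq_nonneg (inner ℝ x (b j) : ℝ)]

lemma eNorm_eq {k : ℕ} (v : Fin k → ℝ) :
    eNorm v = ‖(WithLp.equiv 2 (Fin k → ℝ)).symm v‖ := by
  rw [EuclideanSpace.norm_eq, eNorm]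
  congr 1
  apply Finset.sum_congr rfl
  intro a _
  rw [Real.norm_eq_abs, sq_abs]
  rfl

lemma eNorm_nonneg {k : ℕ} (v : Fin k → ℝ) : 0 ≤ eNorm v := Real.sqrt_nonneg _

lemma eNorm_sq {k : ℕ} (v : Fin k → ℝ) : eNorm v ^ 2 = v ⬝ᵥ v := by
  rw [eNorm, Real.sq_sqrt (by positivity)]
  simp [dotProduct, sq]

lemma eNorm_add_le {k : ℕ} (u v : Fin k → ℝ) : eNorm (u + v) ≤ eNorm u + eNorm v := by
  rw [eNorm_eq, eNorm_eq, eNorm_eq]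
  exact norm_add_le ((WithLp.equiv 2 (Fin k → ℝ)).symm u) ((WithLp.equiv 2 (Fin k → ℝ)).symm v)

lemma eNorm_smul {k : ℕ} (c : ℝ) (v : Fin k → ℝ) : eNorm (c • v) = |c| * eNorm v := by
  rw [eNorm_eq, eNorm_eq]
  have : (WithLp.equiv 2 (Fin k → ℝ)).symm (c • v)
      = c • (WithLp.equiv 2 (Fin k → ℝ)).symm v := rfl
  rw [this, norm_smul, Real.norm_eq_abs]

lemma eNorm_sum_le {k : ℕ} {ι : Type*} (s : Finset ι) (f : ι → (Fin k → ℝ)) :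
    eNorm (∑ j ∈ s, f j) ≤ ∑ j ∈ s, eNorm (f j) := by
  have : (WithLp.equiv 2 (Fin k → ℝ)).symm (∑ j ∈ s, f j)
      = ∑ j ∈ s, (WithLp.equiv 2 (Fin k → ℝ)).symm (f j) := by
    exact map_sum (WithLp.linearEquiv 2 ℝ (Fin k → ℝ)).symm f s
  rw [eNorm_eq, this]
  refine (norm_sum_le _ _).trans ?_
  exact le_of_eq (Finset.sum_congr rfl fun j _ => (eNorm_eq (f j)).symm)

lemma specNorm_nonneg {m n : Type*} [Fintype m] [Fintype n] [DecidableEq m] [DecidableEq n]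
    (A : Matrix m n ℝ) : 0 ≤ specNorm A := norm_nonneg _

lemma eNorm_mulVec_le {m k : ℕ} (A : Matrix (Fin m) (Fin k) ℝ) (w : Fin k → ℝ) :
    eNorm (A *ᵥ w) ≤ specNorm A * eNorm w := by
  rw [eNorm_eq, eNorm_eq]
  have : (WithLp.equiv 2 (Fin m → ℝ)).symm (A *ᵥ w)
      = (LinearMap.toContinuousLinearMap (Matrix.toEuclideanLin A))
          ((WithLp.equiv 2 (Fin k → ℝ)).symm w) := by
    simp [Matrix.toEuclideanLin_apply_piLp_toLp]
  rw [this]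
  exact (LinearMap.toContinuousLinearMap (Matrix.toEuclideanLin A)).le_opNorm _

lemma dotProduct_le_eNorm_mul {k : ℕ} (u v : Fin k → ℝ) : u ⬝ᵥ v ≤ eNorm u * eNorm v := by
  have h := real_inner_le_norm ((WithLp.equiv 2 (Fin k → ℝ)).symm u)
    ((WithLp.equiv 2 (Fin k → ℝ)).symm v)
  rw [eNorm_eq, eNorm_eq]
  refine le_trans (le_of_eq ?_) h
  simp only [PiLp.inner_apply, RCLike.inner_apply, dotProduct, starRingEnd_apply,
    star_trivial]
  exact Finset.sum_congr rfl fun a _ => mul_comm _ _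

lemma le_blockVecNorm {N : ℕ} (hN : 0 < N) {d : Fin N → ℕ}
    (x : ((i : Fin N) × Fin (d i)) → ℝ) (i : Fin N) :
    eNorm (fun a => x ⟨i, a⟩) ≤ blockVecNorm x := by
  have : Nonempty (Fin N) := ⟨⟨0, hN⟩⟩
  exact le_ciSup (f := fun i => eNorm (fun a => x ⟨i, a⟩)) (Set.Finite.bddAbove (Set.finite_range _)) i

lemma blockVecNorm_exists {N : ℕ} (hN : 0 < N) {d : Fin N → ℕ}
    (x : ((i : Fin N) × Fin (d i)) → ℝ) :
    ∃ i, blockVecNorm x = eNorm (fun a => x ⟨i, a⟩) := by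
  have : Nonempty (Fin N) := ⟨⟨0, hN⟩⟩
  obtain ⟨i, hi⟩ := exists_eq_ciSup_of_finite (f := fun i => eNorm (fun a => x ⟨i, a⟩))
  exact ⟨i, hi.symm⟩

lemma blockVecNorm_nonneg {N : ℕ} (hN : 0 < N) {d : Fin N → ℕ}
    (x : ((i : Fin N) × Fin (d i)) → ℝ) : 0 ≤ blockVecNorm x := by
  obtain ⟨i, hi⟩ := blockVecNorm_exists hN x
  exact hi ▸ eNorm_nonneg _

lemma blockVecNorm_pos {N : ℕ} (hN : 0 < N) {d : Fin N → ℕ}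
    {x : ((i : Fin N) × Fin (d i)) → ℝ} (hx : x ≠ 0) : 0 < blockVecNorm x := by
  obtain ⟨⟨i, a⟩, hne⟩ := Function.ne_iff.mp hx
  have h1 : |x ⟨i, a⟩| ≤ eNorm (fun b => x ⟨i, b⟩) := by
    rw [eNorm, ← Real.sqrt_sq_eq_abs]
    apply Real.sqrt_le_sqrt
    exact Finset.single_le_sum (f := fun b => x ⟨i, b⟩ ^ 2) (fun b _ => sq_nonneg _)
      (Finset.mem_univ a)
  have h2 : 0 < |x ⟨i, a⟩| := abs_pos.mpr hne
  exact lt_of_lt_of_le (lt_of_lt_of_le h2 h1) (le_blockVecNorm hN x i)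

lemma mulVec_blk {N : ℕ} {d : Fin N → ℕ}
    (B : Matrix ((i : Fin N) × Fin (d i)) ((i : Fin N) × Fin (d i)) ℝ)
    (x : ((i : Fin N) × Fin (d i)) → ℝ) (i : Fin N) :
    (fun a => (B *ᵥ x) ⟨i, a⟩) = ∑ j, (blk B i j) *ᵥ (fun b => x ⟨j, b⟩) := by
  funext a
  simp only [Matrix.mulVec, dotProduct, Finset.sum_apply]
  rw [← Finset.univ_sigma_univ, Finset.sum_sigma]
  rfl


theorem relative_state_error_bound {N : ℕ} (hN : 0 < N) {d : Fin N → ℕ}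
    (Q : Matrix ((i : Fin N) × Fin (d i)) ((i : Fin N) × Fin (d i)) ℝ)
    (hQ : Q.PosDef)
    (δ : Fin N → ℝ)
    (hδ : ∀ i, δ i = minEig (blk Q i i) - ∑ j ∈ Finset.univ.erase i, specNorm (blk Q i j))
    (hδpos : ∀ i, 0 < δ i)
    (α : Fin N → ℝ) (hα : ∀ i, 0 < α i)
    (A : Matrix ((i : Fin N) × Fin (d i)) ((i : Fin N) × Fin (d i)) ℝ)
    (hA : A = Matrix.diagonal (fun a => α a.1))
    (r : ((i : Fin N) × Fin (d i)) → ℝ)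
    (η : ℝ) (hη : η ∈ Set.Ioo (0 : ℝ) 1)
    (hαle : ∀ i, α i ≤ η / (1 - η) * δ i)
    (hx : -(Q⁻¹.mulVec r) ≠ 0) :
    blockVecNorm (-(Q⁻¹.mulVec r) - -((Q + A)⁻¹.mulVec r))
      / blockVecNorm (-(Q⁻¹.mulVec r)) ≤ η := by
  obtain ⟨hη0, hη1⟩ := hη
  have hQA : (Q + A).PosDef := by
    refine hQ.add_posSemidef ?_
    rw [hA]
    exact Matrix.posSemidef_diagonal_iff.mpr fun a => (hα a.1).le
  set xh := -(Q⁻¹.mulVec r) with hxh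
  set xA := -((Q + A)⁻¹.mulVec r) with hxA
  set e := xh - xA with he_def
  have hQx : Q *ᵥ xh = -r := by
    rw [hxh, Matrix.mulVec_neg, Matrix.mulVec_mulVec, Matrix.mul_nonsing_inv _
      hQ.det_pos.ne'.isUnit, Matrix.one_mulVec]
  have hQAx : (Q + A) *ᵥ xA = -r := by
    rw [hxA, Matrix.mulVec_neg, Matrix.mulVec_mulVec, Matrix.mul_nonsing_inv _
      hQA.det_pos.ne'.isUnit, Matrix.one_mulVec]
  have hkey : (Q + A) *ᵥ e = A *ᵥ xh := by
    rw [he_def, Matrix.mulVec_sub, hQAx, Matrix.add_mulVec, hQx]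
    abel
  have hxpos : 0 < blockVecNorm xh := blockVecNorm_pos hN hx
  by_cases he0 : blockVecNorm e = 0
  · rw [he0, zero_div]; exact hη0.le
  · obtain ⟨i, hi⟩ := blockVecNorm_exists hN e
    set w : Fin (d i) → ℝ := fun a => e ⟨i, a⟩ with hw
    have hwpos : 0 < eNorm w := by
      rcases lt_or_eq_of_le (blockVecNorm_nonneg hN e) with h | h
      · exact hi ▸ h
      · exact absurd h.symm he0
    set M := blk Q i i with hM_def
    have hM : M.IsHermitian := by
      ext a b
      simp only [Matrix.conjTranspose_apply, hM_def, blk, star_trivial]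
      conv_rhs => rw [← hQ.1]
      simp [Matrix.conjTranspose_apply]
    -- specNorm sum nonneg, minEig bound
    have hsum_nonneg : 0 ≤ ∑ j ∈ Finset.univ.erase i, specNorm (blk Q i j) :=
      Finset.sum_nonneg fun j _ => specNorm_nonneg _
    have hmin : δ i ≤ minEig M := by
      have := hδ i
      rw [hM_def]
      linarith
    have hk : d i ≠ 0 := by
      intro h0
      have : eNorm w = 0 := by
        rw [eNorm]
        have : (Finset.univ : Finset (Fin (d i))) = ∅ := by
          rw [Finset.univ_eq_empty_iff]
          rw [h0]; exact Fin.isEmpty'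
        rw [this, Finset.sum_empty, Real.sqrt_zero]
      linarith
    -- decomposition of block i of (Q+A) e
    set u1 : Fin (d i) → ℝ := M *ᵥ w + α i • w with hu1
    set u2 : Fin (d i) → ℝ :=
      ∑ j ∈ Finset.univ.erase i, (blk Q i j) *ᵥ (fun b => e ⟨j, b⟩) with hu2
    have hdecomp : (fun a => ((Q + A) *ᵥ e) ⟨i, a⟩) = u1 + u2 := by
      funext a
      have h1 : ((Q + A) *ᵥ e) ⟨i, a⟩ = (Q *ᵥ e) ⟨i, a⟩ + (A *ᵥ e) ⟨i, a⟩ := by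
        rw [Matrix.add_mulVec]; rfl
      have h2 : (A *ᵥ e) ⟨i, a⟩ = α i * w a := by
        rw [hA, Matrix.mulVec_diagonal]
      have h3 : (Q *ᵥ e) ⟨i, a⟩ = (M *ᵥ w) a + u2 a := by
        have := congrFun (mulVec_blk Q e i) a
        rw [this, Finset.sum_apply, ← Finset.add_sum_erase _ _ (Finset.mem_univ i)]
        rw [hu2, Finset.sum_apply]
      rw [Pi.add_apply, h1, h2, h3, hu1]
      simp only [Pi.add_apply, Pi.smul_apply, smul_eq_mul]
      ring
    -- lower bound on eNorm u1
    have hray : (minEig M + α i) * (w ⬝ᵥ w) ≤ u1 ⬝ᵥ w := by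
      have h1 := rayleigh_lower hk hM w
      have h2 : u1 ⬝ᵥ w = w ⬝ᵥ (M *ᵥ w) + α i * (w ⬝ᵥ w) := by
        rw [hu1, add_dotProduct, smul_dotProduct, dotProduct_comm (M *ᵥ w) w]
        simp [smul_eq_mul]
      rw [h2]
      linarith
    have hu1_lb : (minEig M + α i) * eNorm w ≤ eNorm u1 := by
      have hcs := dotProduct_le_eNorm_mul u1 w
      have hsq := eNorm_sq w
      refine le_of_mul_le_mul_right ?_ hwpos
      calc (minEig M + α i) * eNorm w * eNorm w = (minEig M + α i) * (w ⬝ᵥ w) := by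
            rw [← hsq]; ring
        _ ≤ u1 ⬝ᵥ w := hray
        _ ≤ eNorm u1 * eNorm w := hcs
    have hu2_ub : eNorm u2 ≤ (∑ j ∈ Finset.univ.erase i, specNorm (blk Q i j)) * eNorm w := by
      rw [hu2]
      refine (eNorm_sum_le _ _).trans ?_
      rw [Finset.sum_mul]
      refine Finset.sum_le_sum fun j _ => ?_
      refine (eNorm_mulVec_le _ _).trans ?_
      refine mul_le_mul_of_nonneg_left ?_ (specNorm_nonneg _)
      rw [← hi]
      exact le_blockVecNorm hN e j
    have hg_lb : (δ i + α i) * eNorm w ≤ eNorm (fun a => ((Q + A) *ᵥ e) ⟨i, a⟩) := by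
      have hneg : eNorm (-u2) = eNorm u2 := by simp [eNorm]
      have hrep : u1 = (fun a => ((Q + A) *ᵥ e) ⟨i, a⟩) + (-u2) := by
        rw [hdecomp]; funext a; simp
      have h1 : eNorm u1 ≤ eNorm (fun a => ((Q + A) *ᵥ e) ⟨i, a⟩) + eNorm u2 := by
        rw [hrep]
        exact (eNorm_add_le _ _).trans (by rw [hneg])
      have h2 : (δ i + α i) * eNorm w
          = (minEig M + α i) * eNorm w
            - (∑ j ∈ Finset.univ.erase i, specNorm (blk Q i j)) * eNorm w := by
        rw [hδ i, hM_def]; ring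
      linarith
    have hg_ub : eNorm (fun a => ((Q + A) *ᵥ e) ⟨i, a⟩) ≤ α i * blockVecNorm xh := by
      rw [hkey]
      have hrep : (fun a => (A *ᵥ xh) ⟨i, a⟩) = α i • (fun a => xh ⟨i, a⟩) := by
        funext a; rw [hA, Matrix.mulVec_diagonal]; rfl
      rw [hrep, eNorm_smul, abs_of_pos (hα i)]
      exact mul_le_mul_of_nonneg_left (le_blockVecNorm hN xh i) (hα i).le
    have hαη : α i ≤ η * (δ i + α i) := by
      have h1 := hαle i
      have h2 : 0 < 1 - η := by linarith
      have h3 : η / (1 - η) * δ i * (1 - η) = η * δ i := by field_simp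
      nlinarith [mul_le_mul_of_nonneg_right h1 h2.le]
    rw [div_le_iff₀ hxpos, hi]
    nlinarith [hg_lb, hg_ub, hδpos i, hα i, hwpos.le, hxpos.le,
      mul_le_mul_of_nonneg_right hαη hxpos.le]
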